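/- The set Λ = {(q,q) : q ∈ ℤ[1/p]} is a lattice in G = ℝ × ℚ_p (discrete and cocompact), and B = [0,1) × ℤ_p is a fundamental domain for Λ in G: every (s,x) ∈ ℝ × ℚ_p decomposes uniquely as (s,x) = (λ,λ) + (b₁,b₂) with λ ∈ ℤ[1/p] and (b₁,b₂) ∈ [0,1) × ℤ_p, where λ = {x}_p + ⌊s − {x}_p⌋. -/

import Mathlib

/-- Membership in `ℤ[1/p] = {a/pᵏ : a, k ∈ ℤ}` as a set of rationals. -/
def InZInvP (p : ℕ) (q : ℚ) : Prop := ∃ a k : ℤ, q = (a : ℚ) / (p : ℚ) ^ k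

section aux
variable (p : ℕ) [hp : Fact p.Prime]

lemma pQ_ne : ((p : ℚ)) ≠ 0 := Nat.cast_ne_zero.mpr hp.1.ne_zero

lemma inZInvP_natForm {q : ℚ} (h : InZInvP p q) : ∃ (a : ℤ) (n : ℕ), q = (a : ℚ) / (p : ℚ) ^ n := by
  obtain ⟨a, k, rfl⟩ := h
  rcases le_or_gt 0 k with hk | hk
  · exact ⟨a, k.toNat, by rw [← zpow_natCast, Int.toNat_of_nonneg hk]⟩
  · refine ⟨a * (p : ℤ) ^ (-k).toNat, 0, ?_⟩
    have : (p : ℚ) ^ k = ((p : ℚ) ^ (-k).toNat)⁻¹ := by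
      rw [← zpow_natCast, Int.toNat_of_nonneg (by omega : (0:ℤ) ≤ -k), ← zpow_neg, neg_neg]
    rw [this]
    push_cast
    field_simp

lemma inZInvP_zero : InZInvP p 0 := ⟨0, 0, by simp⟩

lemma inZInvP_intCast (m : ℤ) : InZInvP p (m : ℚ) := ⟨m, 0, by simp⟩

lemma inZInvP_add {q r : ℚ} (hq : InZInvP p q) (hr : InZInvP p r) : InZInvP p (q + r) := by
  obtain ⟨a, n, rfl⟩ := inZInvP_natForm p hq
  obtain ⟨b, m, rfl⟩ := inZInvP_natForm p hr
  refine ⟨a * p ^ m + b * p ^ n, (n : ℤ) + m, ?_⟩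
  have hp0 := pQ_ne p
  rw [zpow_add₀ hp0, zpow_natCast, zpow_natCast]
  push_cast
  rw [div_add_div _ _ (pow_ne_zero n hp0) (pow_ne_zero m hp0)]
  ring_nf

lemma inZInvP_neg {q : ℚ} (hq : InZInvP p q) : InZInvP p (-q) := by
  obtain ⟨a, k, rfl⟩ := hq
  exact ⟨-a, k, by push_cast; ring⟩

/-- An element of ℤ[1/p] which is a p-adic integer is an integer. -/
lemma inZInvP_int_of_norm_le_one {q : ℚ} (hq : InZInvP p q)
    (h : ‖((q : ℚ) : ℚ_[p])‖ ≤ 1) : ∃ m : ℤ, q = (m : ℚ) := by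
  obtain ⟨a, n, rfl⟩ := inZInvP_natForm p hq
  have hp0 := pQ_ne p
  have hnorm : ‖((a : ℤ) : ℚ_[p])‖ ≤ (p : ℝ) ^ (-(n : ℤ)) := by
    have : ((a : ℚ) : ℚ_[p]) = (((a : ℚ) / (p : ℚ) ^ n : ℚ) : ℚ_[p]) * ((p : ℚ_[p]) ^ n) := by
      push_cast
      rw [div_mul_cancel₀]
      exact pow_ne_zero _ (Nat.cast_ne_zero.mpr hp.1.ne_zero)
    rw [show ((a : ℤ) : ℚ_[p]) = ((a : ℚ) : ℚ_[p]) by push_cast; ring, this, norm_mul,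
      Padic.norm_p_pow]
    calc ‖(((a : ℚ) / (p : ℚ) ^ n : ℚ) : ℚ_[p])‖ * (p : ℝ) ^ (-(n : ℤ)) ≤ 1 * (p : ℝ) ^ (-(n : ℤ)) := by
          gcongr
      _ = (p : ℝ) ^ (-(n : ℤ)) := one_mul _
  obtain ⟨m, hm⟩ := (Padic.norm_int_le_pow_iff_dvd a n).mp hnorm
  refine ⟨m, ?_⟩
  rw [hm]
  push_cast
  rw [mul_comm, mul_div_assoc, div_self (pow_ne_zero _ (pQ_ne p)), mul_one]

/-- Uniqueness of the lattice coordinate. -/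
lemma unique_coord (v : ℝ × ℚ_[p]) {q q' : ℚ}
    (h : InZInvP p q ∧ v.1 - (q : ℝ) ∈ Set.Ico (0 : ℝ) 1 ∧ ‖v.2 - (q : ℚ_[p])‖ ≤ 1)
    (h' : InZInvP p q' ∧ v.1 - (q' : ℝ) ∈ Set.Ico (0 : ℝ) 1 ∧ ‖v.2 - (q' : ℚ_[p])‖ ≤ 1) :
    q = q' := by
  obtain ⟨hq1, hq2, hq3⟩ := h
  obtain ⟨hq1', hq2', hq3'⟩ := h'
  have hd : InZInvP p (q - q') := by
    have := inZInvP_add p hq1 (inZInvP_neg p hq1')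
    simpa [sub_eq_add_neg] using this
  have hnorm : ‖(((q - q' : ℚ)) : ℚ_[p])‖ ≤ 1 := by
    have : (((q - q' : ℚ)) : ℚ_[p]) = (v.2 - (q' : ℚ_[p])) + -(v.2 - (q : ℚ_[p])) := by
      push_cast; ring
    rw [this]
    calc ‖(v.2 - (q' : ℚ_[p])) + -(v.2 - (q : ℚ_[p]))‖
        ≤ max ‖v.2 - (q' : ℚ_[p])‖ ‖-(v.2 - (q : ℚ_[p]))‖ := Padic.nonarchimedean _ _
      _ ≤ 1 := max_le hq3' (by rwa [norm_neg])
  obtain ⟨m, hm⟩ := inZInvP_int_of_norm_le_one p hd hnorm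
  have habs : |(q : ℝ) - (q' : ℝ)| < 1 := by
    rw [abs_sub_lt_iff]
    constructor <;> [nlinarith [hq2.1, hq2.2, hq2'.1, hq2'.2]; nlinarith [hq2.1, hq2.2, hq2'.1, hq2'.2]]
  have : ((m : ℚ) : ℝ) = (q : ℝ) - (q' : ℝ) := by rw [← hm]; push_cast; ring
  have hm0 : m = 0 := by
    have : |((m : ℤ) : ℝ)| < 1 := by rw [show ((m : ℤ) : ℝ) = ((m : ℚ) : ℝ) by push_cast; ring, this]; exact habs
    exact_mod_cast Int.abs_lt_one_iff.mp (by exact_mod_cast this)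
  have : q - q' = 0 := by rw [hm, hm0]; simp
  linarith [this]

/-- Shifting a p-adic fractional part by a floor gives a full coordinate. -/
lemma shift_coord (v : ℝ × ℚ_[p]) (q0 : ℚ) (h1 : InZInvP p q0)
    (h2 : ‖v.2 - (q0 : ℚ_[p])‖ ≤ 1) :
    InZInvP p (q0 + (⌊v.1 - (q0 : ℝ)⌋ : ℤ)) ∧
    v.1 - ((q0 + (⌊v.1 - (q0 : ℝ)⌋ : ℤ) : ℚ) : ℝ) ∈ Set.Ico (0 : ℝ) 1 ∧
    ‖v.2 - ((q0 + (⌊v.1 - (q0 : ℝ)⌋ : ℤ) : ℚ) : ℚ_[p])‖ ≤ 1 := by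
  set m : ℤ := ⌊v.1 - (q0 : ℝ)⌋ with hm
  refine ⟨inZInvP_add p h1 (inZInvP_intCast p m), ?_, ?_⟩
  · have : v.1 - ((q0 + (m : ℚ) : ℚ) : ℝ) = Int.fract (v.1 - (q0 : ℝ)) := by
      rw [Int.fract]
      push_cast
      ring
    rw [this]
    exact ⟨Int.fract_nonneg _, Int.fract_lt_one _⟩
  · have : v.2 - ((q0 + (m : ℚ) : ℚ) : ℚ_[p]) = (v.2 - (q0 : ℚ_[p])) + -((m : ℤ) : ℚ_[p]) := by
      push_cast; ring
    rw [this]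
    calc ‖(v.2 - (q0 : ℚ_[p])) + -((m : ℤ) : ℚ_[p])‖
        ≤ max ‖v.2 - (q0 : ℚ_[p])‖ ‖-((m : ℤ) : ℚ_[p])‖ := Padic.nonarchimedean _ _
      _ ≤ 1 := max_le h2 (by rw [norm_neg]; exact Padic.norm_int_le_one m)

/-- p-adic fractional part: existence. -/
lemma exists_padic_fract (x : ℚ_[p]) :
    ∃ q0 : ℚ, InZInvP p q0 ∧ (q0 : ℝ) ∈ Set.Ico (0 : ℝ) 1 ∧ ‖x - (q0 : ℚ_[p])‖ ≤ 1 := by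
  have hp1 : (1 : ℝ) < p := by exact_mod_cast hp.1.one_lt
  obtain ⟨N, hN⟩ := exists_nat_gt ‖x‖
  have hn : ‖x‖ ≤ (p : ℝ) ^ N := by
    calc ‖x‖ ≤ N := hN.le
      _ ≤ (p : ℝ) ^ N := by
        calc (N : ℝ) ≤ ((p ^ N : ℕ) : ℝ) := by
              exact_mod_cast (Nat.lt_pow_self (n := N) hp.1.one_lt).le
          _ = (p : ℝ) ^ N := by push_cast; ring
  set n := N
  have hy : ‖(p : ℚ_[p]) ^ n * x‖ ≤ 1 := by
    rw [norm_mul, Padic.norm_p_pow]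
    have hxle : ‖x‖ ≤ (p : ℝ) ^ (n : ℤ) := by rw [zpow_natCast]; exact hn
    calc (p : ℝ) ^ (-(n : ℤ)) * ‖x‖ ≤ (p : ℝ) ^ (-(n : ℤ)) * (p : ℝ) ^ (n : ℤ) :=
          mul_le_mul_of_nonneg_left hxle (by positivity)
      _ = 1 := by rw [← zpow_add₀ (by positivity : (p:ℝ) ≠ 0)]; simp
  set y : ℤ_[p] := ⟨(p : ℚ_[p]) ^ n * x, hy⟩ with hydef
  set c : ℕ := y.appr n with hc
  have hclt : c < p ^ n := y.appr_lt n
  have hspec : ‖y - (c : ℤ_[p])‖ ≤ (p : ℝ) ^ (-(n : ℤ)) :=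
    ((y - (c : ℤ_[p])).norm_le_pow_iff_mem_span_pow n).mpr (y.appr_spec n)
  refine ⟨(c : ℚ) / (p : ℚ) ^ n, ⟨c, n, by rw [← zpow_natCast]; push_cast; ring⟩, ?_, ?_⟩
  · constructor
    · have h0 : (0:ℚ) ≤ (c : ℚ) / (p : ℚ) ^ n := by positivity
      exact_mod_cast h0
    · have h1 : ((c : ℚ) / (p : ℚ) ^ n) < 1 := by
        rw [div_lt_one (by exact_mod_cast pow_pos hp.1.pos n : (0:ℚ) < (p:ℚ)^n)]
        exact_mod_cast hclt
      exact_mod_cast h1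
  · have key : x - (((c : ℚ) / (p : ℚ) ^ n : ℚ) : ℚ_[p]) =
        ((y - (c : ℤ_[p]) : ℤ_[p]) : ℚ_[p]) * ((p : ℚ_[p]) ^ n)⁻¹ := by
      have hple : ((p : ℚ_[p]) ^ n) ≠ 0 := by
        apply pow_ne_zero
        exact_mod_cast (Nat.cast_ne_zero (R := ℚ_[p])).mpr hp.1.ne_zero
      rw [PadicInt.coe_sub]
      have h1 : ((y : ℚ_[p])) = (p : ℚ_[p]) ^ n * x := rfl
      have h2 : (((c : ℤ_[p]) : ℚ_[p])) = ((c : ℕ) : ℚ_[p]) := by push_cast; ring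
      rw [h1, h2]
      field_simp
      push_cast
      ring_nf
      rw [inv_pow, mul_assoc, mul_inv_cancel₀ hple, mul_one]
    rw [key, norm_mul, norm_inv, Padic.norm_p_pow]
    have hnz : (0:ℝ) < (p : ℝ) ^ (n : ℤ) := by positivity
    calc ‖((y - (c : ℤ_[p]) : ℤ_[p]) : ℚ_[p])‖ * ((p : ℝ) ^ (-(n:ℤ)))⁻¹
        ≤ (p : ℝ) ^ (-(n : ℤ)) * ((p : ℝ) ^ (-(n:ℤ)))⁻¹ := by
          gcongr
          exact hspec
      _ = 1 := by
          rw [zpow_neg]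
          field_simp

end aux

lemma exists_coord (p : ℕ) [Fact p.Prime] (v : ℝ × ℚ_[p]) :
    ∃ q : ℚ, InZInvP p q ∧ v.1 - (q : ℝ) ∈ Set.Ico (0 : ℝ) 1 ∧ ‖v.2 - (q : ℚ_[p])‖ ≤ 1 := by
  obtain ⟨q0, h1, _, h3⟩ := exists_padic_fract p v.2
  obtain ⟨ha, hb, hc⟩ := shift_coord p v q0 h1 h3
  exact ⟨_, ha, hb, hc⟩

/-- The diagonal copy of ℤ[1/p] in ℝ × ℚ_p, as an additive subgroup. -/
def zInvPDiag (p : ℕ) [Fact p.Prime] : AddSubgroup (ℝ × ℚ_[p]) where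
  carrier := {v | ∃ q : ℚ, InZInvP p q ∧ v = ((q : ℝ), (q : ℚ_[p]))}
  zero_mem' := ⟨0, inZInvP_zero p, by simp; rfl⟩
  add_mem' := by
    rintro x y ⟨q, hq, rfl⟩ ⟨r, hr, rfl⟩
    refine ⟨q + r, inZInvP_add p hq hr, ?_⟩
    rw [Prod.ext_iff]
    constructor <;> simp
  neg_mem' := by
    rintro x ⟨q, hq, rfl⟩
    refine ⟨-q, inZInvP_neg p hq, ?_⟩
    rw [Prod.ext_iff]
    constructor <;> simp

lemma zInvPDiag_discrete (p : ℕ) [Fact p.Prime] : DiscreteTopology (zInvPDiag p) := by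
  rw [discreteTopology_iff_isOpen_singleton_zero]
  have key : ({0} : Set (zInvPDiag p)) =
      Subtype.val ⁻¹' (Set.Ioo (-1 : ℝ) 1 ×ˢ Metric.ball (0 : ℚ_[p]) 1) := by
    ext x
    obtain ⟨v, hv⟩ := x
    simp only [Set.mem_singleton_iff, Set.mem_preimage, Set.mem_prod, Set.mem_Ioo,
      Metric.mem_ball, Subtype.ext_iff, ZeroMemClass.coe_zero]
    constructor
    · rintro rfl
      norm_num
    · rintro ⟨⟨h1a, h1b⟩, h2⟩
      obtain ⟨q, hq, rfl⟩ := hv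
      simp only at h1a h1b h2
      have hnorm : ‖((q : ℚ) : ℚ_[p])‖ ≤ 1 := by
        rw [← dist_zero_right]
        exact h2.le
      obtain ⟨m, rfl⟩ := inZInvP_int_of_norm_le_one p hq hnorm
      have hm : m = 0 := by
        have habs : |((m : ℤ) : ℝ)| < 1 := by
          rw [abs_lt]
          constructor
          · exact_mod_cast h1a
          · exact_mod_cast h1b
        exact Int.abs_lt_one_iff.mp (by exact_mod_cast habs)
      subst hm
      norm_num [Prod.ext_iff]
  rw [key]
  exact (isOpen_Ioo.prod Metric.isOpen_ball).preimage continuous_subtype_val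

lemma zInvPDiag_cocompact (p : ℕ) [Fact p.Prime] :
    CompactSpace ((ℝ × ℚ_[p]) ⧸ zInvPDiag p) := by
  have hK : IsCompact ((Set.Icc (0:ℝ) 1) ×ˢ Metric.closedBall (0:ℚ_[p]) 1) :=
    isCompact_Icc.prod (isCompact_closedBall 0 1)
  refine ⟨?_⟩
  have huniv : (Set.univ : Set ((ℝ × ℚ_[p]) ⧸ zInvPDiag p)) =
      QuotientAddGroup.mk '' ((Set.Icc (0:ℝ) 1) ×ˢ Metric.closedBall (0:ℚ_[p]) 1) := by
    ext g
    simp only [Set.mem_univ, true_iff]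
    obtain ⟨v, rfl⟩ := QuotientAddGroup.mk_surjective g
    obtain ⟨q, hq1, hq2, hq3⟩ := exists_coord p v
    refine ⟨v - ((q : ℝ), (q : ℚ_[p])), ⟨⟨hq2.1, hq2.2.le⟩, ?_⟩, ?_⟩
    · rw [Metric.mem_closedBall, dist_zero_right]
      exact hq3
    · rw [QuotientAddGroup.eq]
      refine ⟨q, hq1, ?_⟩
      abel
  rw [huniv]
  exact hK.image continuous_quotient_mk'

theorem zInvP_diagonal_lattice_in_real_prod_padic (p : ℕ) [Fact p.Prime] :
    ∃ Λ : AddSubgroup (ℝ × ℚ_[p]),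
      ((Λ : Set (ℝ × ℚ_[p])) =
        {v | ∃ q : ℚ, InZInvP p q ∧ v = ((q : ℝ), (q : ℚ_[p]))}) ∧
      DiscreteTopology Λ ∧
      CompactSpace ((ℝ × ℚ_[p]) ⧸ Λ) ∧
      (∀ v : ℝ × ℚ_[p], ∃! q : ℚ, InZInvP p q ∧
        v.1 - (q : ℝ) ∈ Set.Ico (0 : ℝ) 1 ∧ ‖v.2 - (q : ℚ_[p])‖ ≤ 1) ∧
      -- the unique lattice coordinate is `{x}_p + ⌊s − {x}_p⌋`:
      (∀ fract : ℚ_[p] → ℚ,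
        (∀ y : ℚ_[p], InZInvP p (fract y) ∧ ((fract y : ℝ)) ∈ Set.Ico (0 : ℝ) 1 ∧
          ‖y - ((fract y : ℚ) : ℚ_[p])‖ ≤ 1) →
        ∀ (v : ℝ × ℚ_[p]) (q : ℚ),
          (InZInvP p q ∧ v.1 - (q : ℝ) ∈ Set.Ico (0 : ℝ) 1 ∧ ‖v.2 - (q : ℚ_[p])‖ ≤ 1) →
          q = fract v.2 + (⌊v.1 - ((fract v.2 : ℚ) : ℝ)⌋ : ℤ)) := by
  refine ⟨zInvPDiag p, rfl, zInvPDiag_discrete p, zInvPDiag_cocompact p, ?_, ?_⟩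
  · intro v
    obtain ⟨q, hq⟩ := exists_coord p v
    exact ⟨q, hq, fun y hy => unique_coord p v hy hq⟩
  · intro fract hf v q hq
    obtain ⟨h1, _, h3⟩ := hf v.2
    obtain ⟨ha, hb, hc⟩ := shift_coord p v (fract v.2) h1 h3
    exact unique_coord p v hq ⟨ha, hb, hc⟩
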